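/- For every v ∈ 𝔽₃^20 there exists a Lagrangian L ⊆ V = 𝔽₃^6 on which the alternating trilinear form Φ_v vanishes, i.e., Φ_v(x,y,z) = 0 for all x,y,z ∈ L. -/

import Mathlib

/-- `V = 𝔽₃⁶`. -/
abbrev V3 : Type := Fin 6 → ZMod 3

/-- The symmetric bilinear form `b(x,y) = x₀y₀ + x₁y₁ + x₂y₂ − x₃y₃ − x₄y₄ − x₅y₅`. -/
def bform (x y : V3) : ZMod 3 :=
  x 0 * y 0 + x 1 * y 1 + x 2 * y 2 - x 3 * y 3 - x 4 * y 4 - x 5 * y 5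

/-- A Lagrangian: a 3-dimensional subspace of `V = 𝔽₃⁶` on which `b` vanishes. -/
def IsLagrangian (L : Submodule (ZMod 3) V3) : Prop :=
  Module.finrank (ZMod 3) L = 3 ∧ ∀ x ∈ L, ∀ y ∈ L, bform x y = 0

/-- The twenty 3-element subsets of `{0,…,5}`, in lexicographic order, each listed
as its elements in increasing order. -/
def triples : Fin 20 → Fin 3 → Fin 6 :=
  ![![0,1,2], ![0,1,3], ![0,1,4], ![0,1,5], ![0,2,3], ![0,2,4], ![0,2,5],
    ![0,3,4], ![0,3,5], ![0,4,5], ![1,2,3], ![1,2,4], ![1,2,5], ![1,3,4],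
    ![1,3,5], ![1,4,5], ![2,3,4], ![2,3,5], ![2,4,5], ![3,4,5]]

/-- The alternating trilinear form `Φ_v(r₁,r₂,r₃) = Σᵢ vᵢ · det Mᵢ`, where `Mᵢ` is the
3×3 submatrix of the 3×6 matrix with rows `r₁,r₂,r₃` formed by the columns of the
`i`-th 3-element subset `Sᵢ` of `{0,…,5}` (lexicographic order). -/
def Phi (v : Fin 20 → ZMod 3) (x y z : V3) : ZMod 3 :=
  ∑ i : Fin 20,
    v i * Matrix.det (Matrix.of ![x ∘ triples i, y ∘ triples i, z ∘ triples i])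

/- ### Auxiliary determinant lemmas -/

private lemma det_add1 (a a' b c : Fin 3 → ZMod 3) :
    Matrix.det (Matrix.of ![a + a', b, c]) =
      Matrix.det (Matrix.of ![a, b, c]) + Matrix.det (Matrix.of ![a', b, c]) := by
  simp [Matrix.det_fin_three, Matrix.vecHead, Matrix.vecTail]; ring

private lemma det_add2 (a b b' c : Fin 3 → ZMod 3) :
    Matrix.det (Matrix.of ![a, b + b', c]) =
      Matrix.det (Matrix.of ![a, b, c]) + Matrix.det (Matrix.of ![a, b', c]) := by
  simp [Matrix.det_fin_three, Matrix.vecHead, Matrix.vecTail]; ring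

private lemma det_add3 (a b c c' : Fin 3 → ZMod 3) :
    Matrix.det (Matrix.of ![a, b, c + c']) =
      Matrix.det (Matrix.of ![a, b, c]) + Matrix.det (Matrix.of ![a, b, c']) := by
  simp [Matrix.det_fin_three, Matrix.vecHead, Matrix.vecTail]; ring

private lemma det_smul1 (k : ZMod 3) (a b c : Fin 3 → ZMod 3) :
    Matrix.det (Matrix.of ![k • a, b, c]) = k * Matrix.det (Matrix.of ![a, b, c]) := by
  simp [Matrix.det_fin_three, Matrix.vecHead, Matrix.vecTail]; ring

private lemma det_smul2 (k : ZMod 3) (a b c : Fin 3 → ZMod 3) :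
    Matrix.det (Matrix.of ![a, k • b, c]) = k * Matrix.det (Matrix.of ![a, b, c]) := by
  simp [Matrix.det_fin_three, Matrix.vecHead, Matrix.vecTail]; ring

private lemma det_smul3 (k : ZMod 3) (a b c : Fin 3 → ZMod 3) :
    Matrix.det (Matrix.of ![a, b, k • c]) = k * Matrix.det (Matrix.of ![a, b, c]) := by
  simp [Matrix.det_fin_three, Matrix.vecHead, Matrix.vecTail]; ring

private lemma det_swap12 (a b c : Fin 3 → ZMod 3) :
    Matrix.det (Matrix.of ![b, a, c]) = -Matrix.det (Matrix.of ![a, b, c]) := by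
  simp [Matrix.det_fin_three, Matrix.vecHead, Matrix.vecTail]; ring

private lemma det_swap13 (a b c : Fin 3 → ZMod 3) :
    Matrix.det (Matrix.of ![c, b, a]) = -Matrix.det (Matrix.of ![a, b, c]) := by
  simp [Matrix.det_fin_three, Matrix.vecHead, Matrix.vecTail]; ring

private lemma det_swap23 (a b c : Fin 3 → ZMod 3) :
    Matrix.det (Matrix.of ![a, c, b]) = -Matrix.det (Matrix.of ![a, b, c]) := by
  simp [Matrix.det_fin_three, Matrix.vecHead, Matrix.vecTail]; ring

private lemma det_dup12 (a c : Fin 3 → ZMod 3) : Matrix.det (Matrix.of ![a, a, c]) = 0 := by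
  simp [Matrix.det_fin_three, Matrix.vecHead, Matrix.vecTail]; ring

private lemma det_dup13 (a b : Fin 3 → ZMod 3) : Matrix.det (Matrix.of ![a, b, a]) = 0 := by
  simp [Matrix.det_fin_three, Matrix.vecHead, Matrix.vecTail]; ring

private lemma det_dup23 (a b : Fin 3 → ZMod 3) : Matrix.det (Matrix.of ![a, b, b]) = 0 := by
  simp [Matrix.det_fin_three, Matrix.vecHead, Matrix.vecTail]; ring

/- ### `Phi` is trilinear and alternating -/

private lemma phi_add1 (v : Fin 20 → ZMod 3) (x x' y z : V3) :
    Phi v (x + x') y z = Phi v x y z + Phi v x' y z := by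
  unfold Phi
  rw [← Finset.sum_add_distrib]
  refine Finset.sum_congr rfl fun i _ => ?_
  rw [← mul_add]
  congr 1
  exact det_add1 (x ∘ triples i) (x' ∘ triples i) (y ∘ triples i) (z ∘ triples i)

private lemma phi_add2 (v : Fin 20 → ZMod 3) (x y y' z : V3) :
    Phi v x (y + y') z = Phi v x y z + Phi v x y' z := by
  unfold Phi
  rw [← Finset.sum_add_distrib]
  refine Finset.sum_congr rfl fun i _ => ?_
  rw [← mul_add]
  congr 1
  exact det_add2 (x ∘ triples i) (y ∘ triples i) (y' ∘ triples i) (z ∘ triples i)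

private lemma phi_add3 (v : Fin 20 → ZMod 3) (x y z z' : V3) :
    Phi v x y (z + z') = Phi v x y z + Phi v x y z' := by
  unfold Phi
  rw [← Finset.sum_add_distrib]
  refine Finset.sum_congr rfl fun i _ => ?_
  rw [← mul_add]
  congr 1
  exact det_add3 (x ∘ triples i) (y ∘ triples i) (z ∘ triples i) (z' ∘ triples i)

private lemma phi_smul1 (v : Fin 20 → ZMod 3) (k : ZMod 3) (x y z : V3) :
    Phi v (k • x) y z = k * Phi v x y z := by
  unfold Phi
  rw [Finset.mul_sum]
  refine Finset.sum_congr rfl fun i _ => ?_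
  rw [show ((k • x) ∘ triples i) = k • (x ∘ triples i) from rfl, det_smul1]
  ring

private lemma phi_smul2 (v : Fin 20 → ZMod 3) (k : ZMod 3) (x y z : V3) :
    Phi v x (k • y) z = k * Phi v x y z := by
  unfold Phi
  rw [Finset.mul_sum]
  refine Finset.sum_congr rfl fun i _ => ?_
  rw [show ((k • y) ∘ triples i) = k • (y ∘ triples i) from rfl, det_smul2]
  ring

private lemma phi_smul3 (v : Fin 20 → ZMod 3) (k : ZMod 3) (x y z : V3) :
    Phi v x y (k • z) = k * Phi v x y z := by
  unfold Phi
  rw [Finset.mul_sum]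
  refine Finset.sum_congr rfl fun i _ => ?_
  rw [show ((k • z) ∘ triples i) = k • (z ∘ triples i) from rfl, det_smul3]
  ring

private lemma phi_swap12 (v : Fin 20 → ZMod 3) (x y z : V3) :
    Phi v y x z = -Phi v x y z := by
  unfold Phi
  rw [← Finset.sum_neg_distrib]
  refine Finset.sum_congr rfl fun i _ => ?_
  rw [det_swap12]; ring

private lemma phi_swap13 (v : Fin 20 → ZMod 3) (x y z : V3) :
    Phi v z y x = -Phi v x y z := by
  unfold Phi
  rw [← Finset.sum_neg_distrib]
  refine Finset.sum_congr rfl fun i _ => ?_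
  rw [det_swap13]; ring

private lemma phi_swap23 (v : Fin 20 → ZMod 3) (x y z : V3) :
    Phi v x z y = -Phi v x y z := by
  unfold Phi
  rw [← Finset.sum_neg_distrib]
  refine Finset.sum_congr rfl fun i _ => ?_
  rw [det_swap23]; ring

private lemma phi_dup12 (v : Fin 20 → ZMod 3) (x z : V3) : Phi v x x z = 0 := by
  unfold Phi
  refine Finset.sum_eq_zero fun i _ => ?_
  rw [det_dup12, mul_zero]

private lemma phi_dup13 (v : Fin 20 → ZMod 3) (x y : V3) : Phi v x y x = 0 := by
  unfold Phi
  refine Finset.sum_eq_zero fun i _ => ?_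
  rw [det_dup13, mul_zero]

private lemma phi_dup23 (v : Fin 20 → ZMod 3) (x y : V3) : Phi v x y y = 0 := by
  unfold Phi
  refine Finset.sum_eq_zero fun i _ => ?_
  rw [det_dup23, mul_zero]

private lemma alt_all {M : Type*} [AddCommGroup M] (f : V3 → V3 → V3 → M)
    (swap12 : ∀ x y z, f y x z = -f x y z)
    (swap13 : ∀ x y z, f z y x = -f x y z)
    (swap23 : ∀ x y z, f x z y = -f x y z)
    (d12 : ∀ x z, f x x z = 0) (d13 : ∀ x y, f x y x = 0) (d23 : ∀ x y, f x y y = 0)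
    (r : Fin 3 → V3) (h : f (r 0) (r 1) (r 2) = 0) :
    ∀ a b c : Fin 3, f (r a) (r b) (r c) = 0 := by
  have h102 : f (r 1) (r 0) (r 2) = 0 := by rw [swap12, h, neg_zero]
  have h021 : f (r 0) (r 2) (r 1) = 0 := by rw [swap23, h, neg_zero]
  have h210 : f (r 2) (r 1) (r 0) = 0 := by rw [swap13, h, neg_zero]
  have h120 : f (r 1) (r 2) (r 0) = 0 := by rw [swap12, swap13, h]; simp
  have h201 : f (r 2) (r 0) (r 1) = 0 := by rw [swap12, swap23, h]; simp
  intro a b c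
  fin_cases a <;> fin_cases b <;> fin_cases c <;>
    first
      | exact h | exact h102 | exact h021 | exact h210 | exact h120 | exact h201
      | exact d12 _ _ | exact d13 _ _ | exact d23 _ _

private lemma phi_all (v : Fin 20 → ZMod 3) (r : Fin 3 → V3)
    (h : Phi v (r 0) (r 1) (r 2) = 0) :
    ∀ a b c : Fin 3, Phi v (r a) (r b) (r c) = 0 :=
  alt_all (fun x y z => Phi v x y z) (phi_swap12 v) (phi_swap13 v) (phi_swap23 v)
    (phi_dup12 v) (phi_dup13 v) (phi_dup23 v) r h

private lemma phi_vanish_span (v : Fin 20 → ZMod 3) (r : Fin 3 → V3)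
    (hall : ∀ a b c : Fin 3, Phi v (r a) (r b) (r c) = 0) :
    ∀ x ∈ Submodule.span (ZMod 3) (Set.range r),
    ∀ y ∈ Submodule.span (ZMod 3) (Set.range r),
    ∀ z ∈ Submodule.span (ZMod 3) (Set.range r), Phi v x y z = 0 := by
  intro x hx y hy z hz
  obtain ⟨a, rfl⟩ := (Submodule.mem_span_range_iff_exists_fun _).1 hx
  obtain ⟨b, rfl⟩ := (Submodule.mem_span_range_iff_exists_fun _).1 hy
  obtain ⟨c, rfl⟩ := (Submodule.mem_span_range_iff_exists_fun _).1 hz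
  simp only [Fin.sum_univ_three, phi_add1, phi_add2, phi_add3, phi_smul1, phi_smul2,
    phi_smul3, hall, mul_zero, add_zero]

/- ### `bform` is bilinear -/

private lemma bform_add1 (x x' y : V3) : bform (x + x') y = bform x y + bform x' y := by
  simp [bform]; ring

private lemma bform_add2 (x y y' : V3) : bform x (y + y') = bform x y + bform x y' := by
  simp [bform]; ring

private lemma bform_smul1 (k : ZMod 3) (x y : V3) : bform (k • x) y = k * bform x y := by
  simp [bform]; ring

private lemma bform_smul2 (k : ZMod 3) (x y : V3) : bform x (k • y) = k * bform x y := by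
  simp [bform]; ring

private lemma bform_vanish_span (r : Fin 3 → V3)
    (hall : ∀ a b : Fin 3, bform (r a) (r b) = 0) :
    ∀ x ∈ Submodule.span (ZMod 3) (Set.range r),
    ∀ y ∈ Submodule.span (ZMod 3) (Set.range r), bform x y = 0 := by
  intro x hx y hy
  obtain ⟨a, rfl⟩ := (Submodule.mem_span_range_iff_exists_fun _).1 hx
  obtain ⟨b, rfl⟩ := (Submodule.mem_span_range_iff_exists_fun _).1 hy
  simp only [Fin.sum_univ_three, bform_add1, bform_add2, bform_smul1, bform_smul2,
    hall, mul_zero, add_zero]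

/- ### The explicit family of thirteen Lagrangians and its Plücker data -/

def reps : Fin 13 → Fin 3 → V3 :=
  ![![![1,0,0,0,0,1],
    ![0,1,0,0,1,0],
    ![0,0,1,2,0,0]],
    ![![1,0,0,0,0,1],
    ![0,1,0,0,2,0],
    ![0,0,1,1,0,0]],
    ![![1,0,0,0,0,1],
    ![0,1,0,1,0,0],
    ![0,0,1,0,1,0]],
    ![![1,0,0,0,0,1],
    ![0,1,0,2,0,0],
    ![0,0,1,0,2,0]],
    ![![1,0,0,0,0,2],
    ![0,1,0,0,1,0],
    ![0,0,1,1,0,0]],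
    ![![1,0,0,0,1,0],
    ![0,1,0,0,0,1],
    ![0,0,1,1,0,0]],
    ![![1,0,0,0,2,0],
    ![0,1,0,0,0,2],
    ![0,0,1,1,0,0]],
    ![![1,0,0,1,0,0],
    ![0,1,0,0,1,0],
    ![0,0,1,0,0,1]],
    ![![1,0,0,2,0,0],
    ![0,1,0,0,1,0],
    ![0,0,1,0,0,2]],
    ![![1,0,1,0,1,2],
    ![0,1,1,0,2,1],
    ![0,0,0,1,2,2]],
    ![![1,0,1,0,2,2],
    ![0,1,2,0,2,2],
    ![0,0,0,1,1,2]],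
    ![![1,0,2,0,1,2],
    ![0,1,2,0,2,1],
    ![0,0,0,1,1,1]],
    ![![1,0,2,0,2,2],
    ![0,1,1,0,2,2],
    ![0,0,0,1,2,1]]]

def Pmat : Matrix (Fin 13) (Fin 20) (ZMod 3) :=
  Matrix.of ![![1,2,0,0,0,2,0,1,0,0,0,0,1,0,2,0,0,0,2,1],
    ![1,1,0,0,0,1,0,1,0,0,0,0,1,0,1,0,0,0,1,1],
    ![1,0,1,0,2,0,0,1,0,0,0,0,1,0,0,1,0,2,0,1],
    ![1,0,2,0,1,0,0,1,0,0,0,0,1,0,0,2,0,1,0,1],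
    ![1,1,0,0,0,2,0,2,0,0,0,0,2,0,2,0,0,0,1,1],
    ![1,1,0,0,0,0,2,0,2,0,0,1,0,1,0,0,0,0,1,1],
    ![1,1,0,0,0,0,1,0,1,0,0,2,0,2,0,0,0,0,1,1],
    ![1,0,0,1,0,2,0,0,0,1,1,0,0,0,2,0,1,0,0,1],
    ![1,0,0,2,0,2,0,0,0,2,2,0,0,0,2,0,2,0,0,1],
    ![0,1,2,2,1,2,2,1,2,2,2,1,1,1,2,2,2,1,1,0],
    ![0,1,1,2,2,2,1,1,1,2,2,2,1,2,2,1,2,2,1,0],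
    ![0,1,1,1,2,2,2,1,2,1,1,1,1,1,2,1,1,2,1,0],
    ![0,1,2,1,1,2,1,1,1,1,1,2,1,2,2,2,1,1,1,0]]

def Qmat : Matrix (Fin 13) (Fin 6) (ZMod 3) :=
  Matrix.of ![![1,0,0,0,0,0],
    ![1,2,0,0,0,0],
    ![1,1,1,0,0,0],
    ![1,1,2,0,0,0],
    ![1,2,0,1,0,0],
    ![1,2,0,2,2,0],
    ![1,2,0,2,1,0],
    ![1,1,0,2,0,1],
    ![1,1,0,2,0,2],
    ![0,1,2,1,2,2],
    ![0,1,1,1,1,2],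
    ![0,1,1,1,2,1],
    ![0,1,2,1,1,1]]

def Rmat : Matrix (Fin 6) (Fin 20) (ZMod 3) :=
  Matrix.of ![![1,2,0,0,0,2,0,1,0,0,0,0,1,0,2,0,0,0,2,1],
    ![0,1,0,0,0,1,0,0,0,0,0,0,0,0,1,0,0,0,1,0],
    ![0,0,1,0,2,0,0,0,0,0,0,0,0,0,0,1,0,2,0,0],
    ![0,0,0,0,0,1,0,1,0,0,0,0,1,0,1,0,0,0,0,0],
    ![0,0,0,0,0,0,1,0,1,0,0,2,0,2,0,0,0,0,0,0],
    ![0,0,0,1,0,0,0,0,0,1,1,0,0,0,0,0,1,0,0,0]]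
set_option maxRecDepth 4000 in
private lemma F2 : Pmat = Qmat * Rmat := by decide

set_option maxRecDepth 10000 in
private lemma F3 : ∀ t : Fin 6 → ZMod 3, ∃ i : Fin 13, Qmat.mulVec t i = 0 := by decide

set_option maxRecDepth 10000 in
private lemma F1 : ∀ i : Fin 13, ∀ j : Fin 20,
    Matrix.det (Matrix.of ![reps i 0 ∘ triples j, reps i 1 ∘ triples j, reps i 2 ∘ triples j])
      = Pmat i j := by
  intro i j
  fin_cases i <;> fin_cases j <;> decide

set_option maxRecDepth 10000 in
private lemma F4 : ∀ i : Fin 13, ∀ a b : Fin 3, bform (reps i a) (reps i b) = 0 := by decide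

set_option maxRecDepth 10000 in
private lemma F5 : ∀ i : Fin 13, ∀ g : Fin 3 → ZMod 3,
    (∑ a : Fin 3, g a • reps i a) = 0 → g = 0 := by decide

private lemma F5' (i : Fin 13) : LinearIndependent (ZMod 3) (reps i) := by
  rw [Fintype.linearIndependent_iff]
  intro g hg
  have := F5 i g hg
  intro a; rw [this]; rfl

private lemma F6 (i : Fin 13) :
    Module.finrank (ZMod 3) (Submodule.span (ZMod 3) (Set.range (reps i))) = 3 := by
  rw [finrank_span_eq_card (F5' i)]; simp

private lemma phi_eq (v : Fin 20 → ZMod 3) (i : Fin 13) :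
    Phi v (reps i 0) (reps i 1) (reps i 2) = Pmat.mulVec v i := by
  unfold Phi Matrix.mulVec dotProduct
  refine Finset.sum_congr rfl fun j _ => ?_
  rw [F1 i j, mul_comm]

/-- For every `v ∈ 𝔽₃²⁰` there is a Lagrangian `L ⊆ 𝔽₃⁶` on which `Φ_v` vanishes. -/
theorem exists_lagrangian_phi_vanishes (v : Fin 20 → ZMod 3) :
    ∃ L : Submodule (ZMod 3) V3, IsLagrangian L ∧
      ∀ x ∈ L, ∀ y ∈ L, ∀ z ∈ L, Phi v x y z = 0 := by
  obtain ⟨i, hi⟩ := F3 (Rmat.mulVec v)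
  have h0 : Phi v (reps i 0) (reps i 1) (reps i 2) = 0 := by
    rw [phi_eq v i, F2, ← Matrix.mulVec_mulVec]
    exact hi
  refine ⟨Submodule.span (ZMod 3) (Set.range (reps i)),
    ⟨F6 i, bform_vanish_span (reps i) (F4 i)⟩, ?_⟩
  exact phi_vanish_span v (reps i) (phi_all v (reps i) h0)
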